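/- Let P and Q be probability measures on a measurable space X, let F be a convex set of measurable functions with F ⊆ L²(P) ∩ L¹(Q) and f ∈ F ⟹ −f ∈ F, and let μ > 0. Suppose f* ∈ F attains the supremum over f ∈ F of { E_Q[f] − E_P[f] − (μ/4)·Var_P[f] }. Then the infimum over all finite signed measures R with R ≪ P, dR/dP ∈ L²(P), and R(X) = 1 of { (1/μ)·D₂(R‖P) + IPM_F(Q, R) } equals E_Q[f*] − E_P[f*] − (μ/4)·Var_P[f*], and this infimum is attained at the measure R* with dR*/dP = 1 + (μ/2)(f* − E_P[f*]). -/

import Mathlib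

open MeasureTheory

lemma mul_int {X : Type*} [MeasurableSpace X] {P : Measure X} {f g : X → ℝ}
    (hf : MemLp f 2 P) (hg : MemLp g 2 P) :
    Integrable (fun x => f x * g x) P := by
  refine Integrable.mono' (((hf.integrable_sq.add hg.integrable_sq).const_mul (1/2)))
    (hf.aestronglyMeasurable.mul hg.aestronglyMeasurable) ?_
  filter_upwards with x
  simp only [Pi.add_apply, Pi.pow_apply]
  rw [Real.norm_eq_abs, abs_mul]
  nlinarith [sq_nonneg (|f x| - |g x|), sq_abs (f x), sq_abs (g x)]

lemma var_nn {X : Type*} [MeasurableSpace X] {P : Measure X} [IsProbabilityMeasure P]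
    {f : X → ℝ} (hf : MemLp f 2 P) : (∫ x, f x ∂P) ^ 2 ≤ ∫ x, f x * f x ∂P := by
  have h := ProbabilityTheory.variance_nonneg f P
  rw [ProbabilityTheory.variance_eq_sub hf] at h
  have e : (∫ x, (f ^ 2) x ∂P) = ∫ x, f x * f x ∂P := by
    apply integral_congr_ae; filter_upwards with x; simp [pow_two]
  simp only [Pi.pow_apply] at h e ⊢
  linarith

lemma int5 {X : Type*} [MeasurableSpace X] {P : Measure X} [IsProbabilityMeasure P]
    {g1 g2 g3 g4 g5 : X → ℝ} (h1 : Integrable g1 P) (h2 : Integrable g2 P)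
    (h3 : Integrable g3 P) (h4 : Integrable g4 P) (h5 : Integrable g5 P)
    (a1 a2 a3 a4 a5 c : ℝ) :
    ∫ x, (a1 * g1 x + a2 * g2 x + a3 * g3 x + a4 * g4 x + a5 * g5 x + c) ∂P
      = a1 * ∫ x, g1 x ∂P + a2 * ∫ x, g2 x ∂P + a3 * ∫ x, g3 x ∂P
        + a4 * ∫ x, g4 x ∂P + a5 * ∫ x, g5 x ∂P + c := by
  have H1 : Integrable (fun x => a1 * g1 x) P := h1.const_mul a1
  have H2 : Integrable (fun x => a1 * g1 x + a2 * g2 x) P := H1.add (h2.const_mul a2)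
  have H3 : Integrable (fun x => a1 * g1 x + a2 * g2 x + a3 * g3 x) P :=
    H2.add (h3.const_mul a3)
  have H4 : Integrable (fun x => a1 * g1 x + a2 * g2 x + a3 * g3 x + a4 * g4 x) P :=
    H3.add (h4.const_mul a4)
  have H5 : Integrable
      (fun x => a1 * g1 x + a2 * g2 x + a3 * g3 x + a4 * g4 x + a5 * g5 x) P :=
    H4.add (h5.const_mul a5)
  rw [integral_add H5 (integrable_const c), integral_add H4 (h5.const_mul a5),
      integral_add H3 (h4.const_mul a4), integral_add H2 (h3.const_mul a3),
      integral_add H1 (h2.const_mul a2), integral_const_mul, integral_const_mul,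
      integral_const_mul, integral_const_mul, integral_const_mul, integral_const]
  simp

lemma first_order {X : Type*} [MeasurableSpace X] (P Q : Measure X)
    [IsProbabilityMeasure P] [IsProbabilityMeasure Q]
    (F : Set (X → ℝ)) (hconv : Convex ℝ F)
    (hF : ∀ f ∈ F, MemLp f 2 P ∧ Integrable f Q)
    (μ : ℝ) (hμ : 0 < μ)
    (fstar : X → ℝ) (hfstarF : fstar ∈ F)
    (hmax : ∀ f ∈ F, (∫ x, f x ∂Q) - (∫ x, f x ∂P)
      - (μ / 4) * ((∫ x, (f x) ^ 2 ∂P) - (∫ x, f x ∂P) ^ 2)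
      ≤ (∫ x, fstar x ∂Q) - (∫ x, fstar x ∂P)
      - (μ / 4) * ((∫ x, (fstar x) ^ 2 ∂P) - (∫ x, fstar x ∂P) ^ 2))
    (f : X → ℝ) (hf : f ∈ F) :
    (∫ x, f x ∂Q) - (∫ x, f x ∂P)
      - (μ/2) * ((∫ x, f x * fstar x ∂P) - (∫ x, f x ∂P) * (∫ x, fstar x ∂P))
    ≤ (∫ x, fstar x ∂Q) - (∫ x, fstar x ∂P)
      - (μ/2) * ((∫ x, fstar x ^ 2 ∂P) - (∫ x, fstar x ∂P) ^ 2) := by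
  have hf2 := (hF fstar hfstarF).1
  have hg2 := (hF f hf).1
  have hfQ := (hF fstar hfstarF).2
  have hgQ := (hF f hf).2
  set h : X → ℝ := fun x => f x - fstar x with hh
  have hh2 : MemLp h 2 P := hg2.sub hf2
  have hhQ : Integrable h Q := hgQ.sub hfQ
  -- constants
  set aQ := ∫ x, fstar x ∂Q with haQ
  set aP := ∫ x, fstar x ∂P with haP
  set s := ∫ x, fstar x * fstar x ∂P with hs
  set bQ := ∫ x, h x ∂Q with hbQ
  set bP := ∫ x, h x ∂P with hbP
  set c := ∫ x, fstar x * h x ∂P with hc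
  set d := ∫ x, h x * h x ∂P with hd
  have hV : bP ^ 2 ≤ d := var_nn hh2
  -- key inequality for each t ∈ (0,1]
  have key : ∀ t : ℝ, 0 < t → t ≤ 1 →
      t * (bQ - bP - (μ/2) * (c - aP * bP)) ≤ (μ/4) * t^2 * (d - bP^2) := by
    intro t ht0 ht1
    have hgF : (fun x => fstar x + t * h x) ∈ F := by
      have := hconv hfstarF hf (by linarith : (0:ℝ) ≤ 1 - t) ht0.le (by ring)
      convert this using 1
      funext x
      simp only [Pi.add_apply, Pi.smul_apply, smul_eq_mul, hh]
      ring
    have hIQ : ∫ x, (fstar x + t * h x) ∂Q = aQ + t * bQ := by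
      rw [integral_add hfQ (hhQ.const_mul t), integral_const_mul]
    have hIP : ∫ x, (fstar x + t * h x) ∂P
        = aP + t * bP := by
      rw [integral_add (hf2.integrable one_le_two)
        ((hh2.integrable one_le_two).const_mul t), integral_const_mul]
    have hISQ : ∫ x, (fstar x + t * h x) ^ 2 ∂P = s + 2*t*c + t^2*d := by
      have e : ∀ x : X, (fstar x + t * h x) ^ 2
          = 1 * (fstar x * fstar x) + (2*t) * (fstar x * h x) + t^2 * (h x * h x)
            + 0 * (fstar x * fstar x) + 0 * (fstar x * fstar x) + 0 := by
        intro x; ring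
      simp_rw [e]
      rw [int5 (mul_int hf2 hf2) (mul_int hf2 hh2) (mul_int hh2 hh2)
        (mul_int hf2 hf2) (mul_int hf2 hf2)]
      ring
    have hM := hmax _ hgF
    rw [hIQ, hIP, hISQ] at hM
    have hsq : (∫ x, fstar x ^ 2 ∂P) = s := by simp_rw [pow_two]; rfl
    rw [hsq] at hM
    nlinarith [hM]
  -- deduce L ≤ 0
  have hL : bQ - bP - (μ/2) * (c - aP * bP) ≤ 0 := by
    set L := bQ - bP - (μ/2) * (c - aP * bP) with hLdef
    by_contra hpos
    push_neg at hpos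
    set V := d - bP^2 with hVdef
    have hV0 : 0 ≤ V := by simp [hVdef]; linarith
    set t : ℝ := min 1 (2*L/(μ*(V+1))) with htdef
    have htpos : 0 < t := by
      apply lt_min one_pos
      positivity
    have ht1 : t ≤ 1 := min_le_left _ _
    have ht2 : t ≤ 2*L/(μ*(V+1)) := min_le_right _ _
    have hk := key t htpos ht1
    -- (μ/4) t² V ≤ (μ/4) t (2L/(μ(V+1))) V = (tL/2)·V/(V+1) < tL
    have h1a : t * t ≤ (2*L/(μ*(V+1))) * t := by
      have := mul_le_mul_of_nonneg_left ht2 htpos.le; linarith [this]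
    have h1 : (μ/4) * t^2 * V ≤ (μ/4) * (2*L/(μ*(V+1))) * t * V := by
      have h1b := mul_le_mul_of_nonneg_right
        (mul_le_mul_of_nonneg_left h1a (show (0:ℝ) ≤ μ/4 by positivity)) hV0
      calc (μ/4) * t^2 * V = μ/4 * (t*t) * V := by ring
        _ ≤ μ/4 * ((2*L/(μ*(V+1)))*t) * V := h1b
        _ = (μ/4) * (2*L/(μ*(V+1))) * t * V := by ring
    have h2 : (μ/4) * (2*L/(μ*(V+1))) * t * V < t * L := by
      have e : (μ/4) * (2*L/(μ*(V+1))) = L/(2*(V+1)) := by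
        field_simp; ring
      rw [e, div_mul_eq_mul_div, div_mul_eq_mul_div,
        div_lt_iff₀ (show (0:ℝ) < 2*(V+1) by linarith)]
      nlinarith [mul_pos (mul_pos htpos hpos) (show (0:ℝ) < V + 2 by linarith)]
    linarith
  -- translate back
  have e1 : bQ = (∫ x, f x ∂Q) - aQ := by
    rw [hbQ]; simp only [hh]; rw [integral_sub hgQ hfQ]
  have e2 : bP = (∫ x, f x ∂P) - aP := by
    rw [hbP]; simp only [hh]
    rw [integral_sub (hg2.integrable one_le_two) (hf2.integrable one_le_two)]
  have e3 : c = (∫ x, f x * fstar x ∂P) - s := by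
    rw [hc]
    have e : ∀ x : X, fstar x * h x = fstar x * f x - fstar x * fstar x := by
      intro x; simp only [hh]; ring
    simp_rw [e]
    rw [integral_sub (mul_int hf2 hg2) (mul_int hf2 hf2)]
    congr 1
    apply integral_congr_ae; filter_upwards with x; ring
  have hsq2 : (∫ x, fstar x ^ 2 ∂P) = s := by simp_rw [pow_two]; rfl
  rw [hsq2]
  rw [e1, e2, e3] at hL
  nlinarith [hL]

/-- strong duality for the penalized balancing-weights problem.  Signed
measures `R ≪ P` with `dR/dP ∈ L²(P)` and `R(X) = 1` are encoded by their densities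
`w = dR/dP`.  If `f* ∈ F` attains the supremum of `E_Q[f] − E_P[f] − (μ/4)·Var_P[f]` over
the convex symmetric class `F ⊆ L²(P) ∩ L¹(Q)`, then the infimum over feasible `R` of
`(1/μ)·D₂(R‖P) + IPM_F(Q,R)` equals this supremal value, attained at the measure with
density `1 + (μ/2)(f* − E_P[f*])`.  (For each feasible `R`, `IPM_F(Q,R)` is rendered as a
real number `b` with `IsLUB`; measures whose IPM set has no real least upper bound have
infinite objective value and impose no constraint.) -/
theorem stmt_4 {X : Type*} [MeasurableSpace X] (P Q : Measure X)
    [IsProbabilityMeasure P] [IsProbabilityMeasure Q]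
    (F : Set (X → ℝ)) (hconv : Convex ℝ F)
    (hF : ∀ f ∈ F, MemLp f 2 P ∧ Integrable f Q)
    (hsymm : ∀ f ∈ F, -f ∈ F)
    (μ : ℝ) (hμ : 0 < μ)
    (obj : (X → ℝ) → ℝ)
    (hobj : obj = fun f => (∫ x, f x ∂Q) - (∫ x, f x ∂P)
      - (μ / 4) * ((∫ x, (f x) ^ 2 ∂P) - (∫ x, f x ∂P) ^ 2))
    (fstar : X → ℝ) (hfstarF : fstar ∈ F)
    (hfstarmax : ∀ f ∈ F, obj f ≤ obj fstar)
    (wstar : X → ℝ) (hwstar : wstar = fun x => 1 + (μ / 2) * (fstar x - ∫ x', fstar x' ∂P)) :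
    -- R* is feasible
    (MemLp wstar 2 P ∧ (∫ x, wstar x ∂P) = 1) ∧
    -- the infimum is attained at R*: its objective value is exactly obj f*
    (∃ b : ℝ, IsLUB ((fun f : X → ℝ => (∫ x, f x ∂Q) - ∫ x, f x * wstar x ∂P) '' F) b ∧
      (1 / μ) * (∫ x, ((wstar x) ^ 2 - 1) ∂P) + b = obj fstar) ∧
    -- obj f* is a lower bound for the objective over all feasible R
    (∀ w : X → ℝ, MemLp w 2 P → (∫ x, w x ∂P) = 1 →
      ∀ b : ℝ, IsLUB ((fun f : X → ℝ => (∫ x, f x ∂Q) - ∫ x, f x * w x ∂P) '' F) b →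
      obj fstar ≤ (1 / μ) * (∫ x, ((w x) ^ 2 - 1) ∂P) + b) := by
  subst hobj
  subst hwstar
  have hf2 := (hF fstar hfstarF).1
  have hfint : Integrable fstar P := hf2.integrable one_le_two
  set m := ∫ x', fstar x' ∂P with hm
  set S := ∫ x, fstar x * fstar x ∂P with hS
  have hsq : (∫ x, fstar x ^ 2 ∂P) = S := by rw [hS]; simp_rw [pow_two]
  -- feasibility of wstar
  have hw2 : MemLp (fun x => 1 + (μ / 2) * (fstar x - m)) 2 P := by
    have e : (fun x => 1 + (μ / 2) * (fstar x - m))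
        = (fun _ : X => (1:ℝ)) + fun x => (μ/2) * ((fstar - fun _ : X => m) x) := by
      funext x; simp
    rw [e]
    exact (memLp_const (1:ℝ)).add ((hf2.sub (memLp_const (m:ℝ))).const_mul (μ/2))
  have hwint : (∫ x, (1 + (μ / 2) * (fstar x - m)) ∂P) = 1 := by
    have e : ∀ x : X, 1 + (μ / 2) * (fstar x - m)
        = (μ/2) * fstar x + 0 * fstar x + 0 * fstar x + 0 * fstar x + 0 * fstar x
          + (1 - (μ/2) * m) := by intro x; ring
    simp_rw [e]
    rw [int5 hfint hfint hfint hfint hfint]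
    rw [← hm]; ring
  -- key product computation
  have keyw : ∀ g : X → ℝ, MemLp g 2 P →
      (∫ x, g x * (1 + (μ / 2) * (fstar x - m)) ∂P)
        = (1 - (μ/2) * m) * (∫ x, g x ∂P) + (μ/2) * (∫ x, g x * fstar x ∂P) := by
    intro g hg
    have e : ∀ x : X, g x * (1 + (μ / 2) * (fstar x - m))
        = (1 - (μ/2)*m) * g x + (μ/2) * (g x * fstar x) + 0 * g x + 0 * g x + 0 * g x
          + 0 := by intro x; ring
    simp_rw [e]
    rw [int5 (hg.integrable one_le_two) (mul_int hg hf2) (hg.integrable one_le_two)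
      (hg.integrable one_le_two) (hg.integrable one_le_two)]
    ring
  refine ⟨⟨hw2, hwint⟩, ?_, ?_⟩
  · -- attainment
    refine ⟨(∫ x, fstar x ∂Q) - ∫ x, fstar x * (1 + (μ / 2) * (fstar x - m)) ∂P,
      IsGreatest.isLUB ⟨⟨fstar, hfstarF, rfl⟩, ?_⟩, ?_⟩
    · rintro y ⟨f, hfF, rfl⟩
      have FO := first_order P Q F hconv hF μ hμ fstar hfstarF hfstarmax f hfF
      beta_reduce
      rw [keyw f (hF f hfF).1, keyw fstar hf2]
      have e : (∫ x, fstar x * fstar x ∂P) = S := hS.symm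
      rw [hsq] at FO
      simp only [← hm] at FO ⊢
      linarith
    · -- value equality
      have hval : (∫ x, ((1 + (μ / 2) * (fstar x - m)) ^ 2 - 1) ∂P)
          = (μ^2/4) * (S - m^2) := by
        have e : ∀ x : X, (1 + (μ / 2) * (fstar x - m)) ^ 2 - 1
            = (μ - (μ/2)^2 * (2*m)) * fstar x + (μ/2)^2 * (fstar x * fstar x)
              + 0 * fstar x + 0 * fstar x + 0 * fstar x
              + (- μ * m + (μ/2)^2 * m^2) := by intro x; ring
        simp_rw [e]
        rw [int5 hfint (mul_int hf2 hf2) hfint hfint hfint]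
        rw [← hm, ← hS]; ring
      beta_reduce
      rw [keyw fstar hf2, hval, hsq]
      have e2 : (∫ x, fstar x * fstar x ∂P) = S := hS.symm
      rw [e2, ← hm]
      field_simp
      ring
  · -- weak duality
    intro w hw2' hw1 b hlub
    have hb : (∫ x, fstar x ∂Q) - (∫ x, fstar x * w x ∂P) ≤ b :=
      hlub.1 ⟨fstar, hfstarF, rfl⟩
    have hwint' : Integrable w P := hw2'.integrable one_le_two
    have hpos : (0:ℝ) ≤ ∫ x, ((w x - 1) - (μ/2) * (fstar x - m)) ^ 2 ∂P :=
      integral_nonneg fun x => sq_nonneg _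
    have e : ∀ x : X, ((w x - 1) - (μ/2) * (fstar x - m)) ^ 2
        = 1 * (w x * w x) + (μ/2)^2 * (fstar x * fstar x) + (-(2*(μ/2))) * (fstar x * w x)
          + (2*(μ/2)*m - 2) * w x + (2*(μ/2) - 2*(μ/2)^2*m) * fstar x
          + (1 - 2*(μ/2)*m + (μ/2)^2*m^2) := by intro x; ring
    rw [show (∫ x, ((w x - 1) - (μ/2) * (fstar x - m)) ^ 2 ∂P)
        = ∫ x, (1 * (w x * w x) + (μ/2)^2 * (fstar x * fstar x)
          + (-(2*(μ/2))) * (fstar x * w x)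
          + (2*(μ/2)*m - 2) * w x + (2*(μ/2) - 2*(μ/2)^2*m) * fstar x
          + (1 - 2*(μ/2)*m + (μ/2)^2*m^2)) ∂P from integral_congr_ae
          (Filter.Eventually.of_forall fun x => e x)] at hpos
    rw [int5 (mul_int hw2' hw2') (mul_int hf2 hf2) (mul_int hf2 hw2') hwint' hfint,
      hw1, ← hm, ← hS] at hpos
    have hw2int : (∫ x, ((w x) ^ 2 - 1) ∂P) = (∫ x, w x * w x ∂P) - 1 := by
      have e2 : ∀ x : X, (w x) ^ 2 - 1
          = 1 * (w x * w x) + 0 * (w x * w x) + 0 * (w x * w x) + 0 * (w x * w x)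
            + 0 * (w x * w x) + (-1) := by intro x; ring
      simp_rw [e2]
      rw [int5 (mul_int hw2' hw2') (mul_int hw2' hw2') (mul_int hw2' hw2')
        (mul_int hw2' hw2') (mul_int hw2' hw2')]
      ring
    beta_reduce
    rw [hw2int, hsq, ← hm]
    set W := ∫ x, w x * w x ∂P with hW
    set I := ∫ x, fstar x * w x ∂P with hI
    have hkey : (0:ℝ) ≤ (1/μ) * (W - 1) + (μ/4) * S - I + m - (μ/4) * m^2 := by
      have e4 : (1/μ) * (1 * W + (μ/2)^2 * S + (-(2*(μ/2))) * I
          + (2*(μ/2)*m - 2) * 1 + (2*(μ/2) - 2*(μ/2)^2*m) * m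
          + (1 - 2*(μ/2)*m + (μ/2)^2*m^2))
          = (1/μ) * (W - 1) + (μ/4) * S - I + m - (μ/4) * m^2 := by
        field_simp; ring
      rw [← e4]
      exact mul_nonneg (by positivity) hpos
    linarith
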